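/- Under the constraints consensus algorithm on a jointly strongly connected time-dependent digraph, once all candidate bases have converged to their limiting values B¹, …, Bⁿ, all nodes share the same value: φ(B^i) = φ(B^j) for all i, j ∈ {1, …, n}. -/
import Mathlib


/-- `B` is a basis of `G`: a minimal subset of `G` with finite value equal to `φ(G)`. -/
def IsBasisOf {α : Type*} [DecidableEq α] {Φ : Type*} [LinearOrder Φ] [OrderBot Φ]
    (φ : Finset α → Φ) (B G : Finset α) : Prop :=
  B ⊆ G ∧ ⊥ < φ B ∧ φ B = φ G ∧ ∀ B' ⊂ B, φ B' < φ B

/-- Once the constraints consensus algorithm has converged to limiting bases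
`B¹, …, Bⁿ` on a jointly strongly connected time-dependent digraph, all nodes
share the same basis value: `φ(B^i) = φ(B^j)` for all nodes `i, j`. -/
theorem constraints_consensus_limit_values_agree
    {α : Type*} [DecidableEq α] {Φ : Type*} [LinearOrder Φ] [OrderBot Φ]
    (φ : Finset α → Φ)
    (hmono : ∀ F G : Finset α, F ⊆ G → φ F ≤ φ G)
    (hloc : ∀ F G : Finset α, F ⊆ G → ⊥ < φ F → φ F = φ G →
      ∀ h : α, φ G < φ (insert h G) → φ F < φ (insert h F))
    (n : ℕ) (hn : 0 < n) (h : Fin n → α)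
    (Nin : ℕ → Fin n → Fin n → Bool)
    (hconn : ∀ (t : ℕ) (i j : Fin n),
      Relation.ReflTransGen (fun a b => ∃ τ, t ≤ τ ∧ Nin τ b a = true) i j)
    (B : ℕ → Fin n → Finset α)
    (hupd : ∀ (t : ℕ) (i : Fin n),
      IsBasisOf φ (B (t+1) i)
        (insert (h i) (B t i ∪
          (Finset.univ.filter (fun j => Nin t i j = true)).biUnion (B t))))
    -- the candidate bases have converged to their limiting values
    (Blim : Fin n → Finset α) (T : ℕ)
    (hconv : ∀ t, T ≤ t → ∀ i, B t i = Blim i) :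
    ∀ i j : Fin n, φ (Blim i) = φ (Blim j) := by
  have key : ∀ τ, T ≤ τ → ∀ a b, Nin τ a b = true → φ (Blim b) ≤ φ (Blim a) := by
    intro τ hτ a b hab
    have h1 := hupd τ a
    have e1 : B τ = Blim := funext (hconv τ hτ)
    have e2 : B (τ + 1) a = Blim a := hconv (τ + 1) (Nat.le_succ_of_le hτ) a
    rw [e1, e2] at h1
    have hsub : Blim b ⊆ insert (h a) (Blim a ∪
        (Finset.univ.filter (fun j => Nin τ a j = true)).biUnion Blim) := by
      intro x hx
      apply Finset.mem_insert_of_mem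
      apply Finset.mem_union_right
      exact Finset.mem_biUnion.mpr ⟨b, Finset.mem_filter.mpr ⟨Finset.mem_univ b, hab⟩, hx⟩
    calc φ (Blim b) ≤ _ := hmono _ _ hsub
      _ = φ (Blim a) := h1.2.2.1.symm
  have chain : ∀ i j, Relation.ReflTransGen
      (fun a b => ∃ τ, T ≤ τ ∧ Nin τ b a = true) i j → φ (Blim i) ≤ φ (Blim j) := by
    intro i j hij
    induction hij with
    | refl => exact le_refl _
    | tail _ hstep ih =>
      obtain ⟨τ, hτ, hN⟩ := hstep
      exact ih.trans (key τ hτ _ _ hN)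
  intro i j
  exact le_antisymm (chain i j (hconn T i j)) (chain j i (hconn T j i))
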